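/- Let m_0 > 0, let 0 < \theta_L \le \theta_0 and \theta' > 0 with \theta_0 + \theta' \le \theta_U < \pi/2, and let \rho \ge m_0. Let a, b > 0 satisfy \rho\,(a\cos(\theta_0 + \theta') - b\sin(\theta_0 + \theta')) = 1. Then \rho\,(-a\cos\theta_0 + b\sin\theta_0) \le -1 - \varepsilon\,\max(a,b), where \varepsilon = m_0\,\theta'\,\min(\sin\theta_L, \cos\theta_U) > 0; in particular \rho\,(-a\cos\theta_0 + b\sin\theta_0) \le -\varepsilon\,\max(a,b). -/

import Mathlib

open Real Set

lemma cos_diff_lb (θL θ0 θ' θU : ℝ) (hθL : 0 < θL) (hθL0 : θL ≤ θ0) (hθ' : 0 < θ')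
    (hθU : θ0 + θ' ≤ θU) (hθU2 : θU < Real.pi / 2) :
    θ' * Real.sin θL ≤ Real.cos θ0 - Real.cos (θ0 + θ') := by
  obtain ⟨c, hc, hderiv⟩ := exists_hasDerivAt_eq_slope Real.cos (fun x => -Real.sin x)
    (by linarith : θ0 < θ0 + θ') (Real.continuousOn_cos)
    (fun x _ => Real.hasDerivAt_cos x)
  have hpi := Real.pi_pos
  have hc1 := hc.1
  have hc2 := hc.2
  have hsin : Real.sin θL ≤ Real.sin c := by
    apply Real.strictMonoOn_sin.monotoneOn
    · exact ⟨by linarith, by linarith⟩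
    · exact ⟨by linarith, by linarith⟩
    · linarith
  have h2 : Real.cos θ0 - Real.cos (θ0 + θ') = θ' * Real.sin c := by
    rw [show θ0 + θ' - θ0 = θ' by ring, eq_div_iff hθ'.ne'] at hderiv
    nlinarith [hderiv]
  rw [h2]
  nlinarith

lemma sin_diff_lb (θL θ0 θ' θU : ℝ) (hθL : 0 < θL) (hθL0 : θL ≤ θ0) (hθ' : 0 < θ')
    (hθU : θ0 + θ' ≤ θU) (hθU2 : θU < Real.pi / 2) :
    θ' * Real.cos θU ≤ Real.sin (θ0 + θ') - Real.sin θ0 := by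
  obtain ⟨c, hc, hderiv⟩ := exists_hasDerivAt_eq_slope Real.sin (fun x => Real.cos x)
    (by linarith : θ0 < θ0 + θ') (Real.continuousOn_sin)
    (fun x _ => Real.hasDerivAt_sin x)
  have hpi := Real.pi_pos
  have hc1 := hc.1
  have hc2 := hc.2
  have hcos : Real.cos θU ≤ Real.cos c := by
    apply Real.strictAntiOn_cos.antitoneOn
    · exact ⟨by linarith, by linarith⟩
    · exact ⟨by linarith, by linarith⟩
    · linarith
  have h2 : Real.sin (θ0 + θ') - Real.sin θ0 = θ' * Real.cos c := by
    rw [show θ0 + θ' - θ0 = θ' by ring, eq_div_iff hθ'.ne'] at hderiv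
    nlinarith [hderiv]
  rw [h2]
  nlinarith

/-- the geometric estimate underlying Lemma 4.5.  With
`ε = m₀ θ' min(sin θ_L, cos θ_U) > 0`, if `ρ (a cos(θ₀+θ') - b sin(θ₀+θ')) = 1`
then `ρ (-a cos θ₀ + b sin θ₀) ≤ -1 - ε max(a,b)`, and in particular
`ρ (-a cos θ₀ + b sin θ₀) ≤ -ε max(a,b)`. -/
theorem drift_angle_estimate (m0 θL θ0 θ' θU ρ a b : ℝ)
    (hm0 : 0 < m0) (hθL : 0 < θL) (hθL0 : θL ≤ θ0) (hθ' : 0 < θ')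
    (hθU : θ0 + θ' ≤ θU) (hθU2 : θU < Real.pi / 2) (hρ : m0 ≤ ρ)
    (ha : 0 < a) (hb : 0 < b)
    (hnorm : ρ * (a * Real.cos (θ0 + θ') - b * Real.sin (θ0 + θ')) = 1) :
    0 < m0 * θ' * min (Real.sin θL) (Real.cos θU) ∧
    ρ * (-a * Real.cos θ0 + b * Real.sin θ0)
        ≤ -1 - m0 * θ' * min (Real.sin θL) (Real.cos θU) * max a b ∧
    ρ * (-a * Real.cos θ0 + b * Real.sin θ0)
        ≤ -(m0 * θ' * min (Real.sin θL) (Real.cos θU)) * max a b := by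
  have hX := cos_diff_lb θL θ0 θ' θU hθL hθL0 hθ' hθU hθU2
  have hY := sin_diff_lb θL θ0 θ' θU hθL hθL0 hθ' hθU hθU2
  have hpi := Real.pi_pos
  have hsinL : 0 < Real.sin θL := by
    apply Real.sin_pos_of_pos_of_lt_pi hθL; linarith
  have hcosU : 0 < Real.cos θU := by
    apply Real.cos_pos_of_mem_Ioo; exact ⟨by linarith, hθU2⟩
  set ε := m0 * θ' * min (Real.sin θL) (Real.cos θU) with hε
  have hminpos : 0 < min (Real.sin θL) (Real.cos θU) := lt_min hsinL hcosU
  have hεpos : 0 < ε := mul_pos (mul_pos hm0 hθ') hminpos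
  have hmin1 : min (Real.sin θL) (Real.cos θU) ≤ Real.sin θL := min_le_left _ _
  have hmin2 : min (Real.sin θL) (Real.cos θU) ≤ Real.cos θU := min_le_right _ _
  have hmax : max a b ≤ a + b := max_le (by linarith) (by linarith)
  -- step 1: ε * max a b ≤ m0 * (a * θ' sin θL + b * θ' cos θU)
  have s1 : ε * max a b ≤ m0 * (a * (θ' * Real.sin θL) + b * (θ' * Real.cos θU)) := by
    have h1 : min (Real.sin θL) (Real.cos θU) * (a + b)
        ≤ a * Real.sin θL + b * Real.cos θU := by
      nlinarith [mul_le_mul_of_nonneg_left hmin1 ha.le,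
        mul_le_mul_of_nonneg_left hmin2 hb.le]
    nlinarith [mul_le_mul_of_nonneg_left h1 (mul_pos hm0 hθ').le,
      mul_le_mul_of_nonneg_left hmax hεpos.le]
  -- step 2: m0 * (...) ≤ ρ * (a X + b Y)
  have s2 : m0 * (a * (θ' * Real.sin θL) + b * (θ' * Real.cos θU))
      ≤ ρ * (a * (Real.cos θ0 - Real.cos (θ0 + θ'))
        + b * (Real.sin (θ0 + θ') - Real.sin θ0)) := by
    have hXa : a * (θ' * Real.sin θL) ≤ a * (Real.cos θ0 - Real.cos (θ0 + θ')) :=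
      mul_le_mul_of_nonneg_left hX ha.le
    have hYb : b * (θ' * Real.cos θU) ≤ b * (Real.sin (θ0 + θ') - Real.sin θ0) :=
      mul_le_mul_of_nonneg_left hY hb.le
    have hpos : 0 ≤ a * (θ' * Real.sin θL) + b * (θ' * Real.cos θU) := by positivity
    exact mul_le_mul hρ (by linarith) hpos (by linarith)
  have key : ε * max a b ≤ ρ * (a * (Real.cos θ0 - Real.cos (θ0 + θ'))
      + b * (Real.sin (θ0 + θ') - Real.sin θ0)) := le_trans s1 s2
  have hid : ρ * (-a * Real.cos θ0 + b * Real.sin θ0)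
      = -(ρ * (a * Real.cos (θ0 + θ') - b * Real.sin (θ0 + θ')))
        - ρ * (a * (Real.cos θ0 - Real.cos (θ0 + θ'))
          + b * (Real.sin (θ0 + θ') - Real.sin θ0)) := by ring
  rw [hnorm] at hid
  have hmaxpos : 0 < max a b := lt_max_of_lt_left ha
  refine ⟨hεpos, by linarith, by nlinarith⟩
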